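/- f^L is a probability mass function on ℕ×ℕ, and if (X,Y) is a random pair with joint pmf f^L, then: the marginal pmf of X is f_X(x) = (1/6)(5/6)^x for all x ∈ ℕ; the marginal pmf of Y is f_Y(y) = (1/6)·1{y=0} + (5/6)(1/7)(6/7)^y for all y ∈ ℕ; E[X] = E[Y] = 5; and the Pearson correlation coefficient of X and Y equals √3/12 (≈ 0.1443). -/

import Mathlib

open scoped BigOperators

noncomputable section

namespace DelayedClaims

/-- High-correlation joint pmf: `f^H(x,x) = (1/6)(5/6)^x` and `f^H(x,y) = 0` for `x ≠ y`. -/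
def fH (x y : ℕ) : ℝ := if x = y then (1 / 6 : ℝ) * (5 / 6) ^ x else 0

/-- Low-correlation joint pmf: `f^L(0,0) = 1/6`, `f^L(x,y) = (1/6)(5/6)^x (1/7)(6/7)^y`
for `x ≥ 1`, `y ≥ 0`, and `f^L(0,y) = 0` for `y ≥ 1`. -/
def fL (x y : ℕ) : ℝ :=
  if x = 0 then (if y = 0 then (1 / 6 : ℝ) else 0)
  else (1 / 6 : ℝ) * (5 / 6) ^ x * ((1 / 7) * (6 / 7) ^ y)

/-- Moderate-correlation joint pmf: `f^M = (1/2) f^H + (1/2) f^L`. -/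
def fM (x y : ℕ) : ℝ := (1 / 2) * fH x y + (1 / 2) * fL x y

/-- Expectation of `g(X,Y)` when `(X,Y)` has joint pmf `f`. -/
def Emom (f g : ℕ → ℕ → ℝ) : ℝ := ∑' p : ℕ × ℕ, g p.1 p.2 * f p.1 p.2

/-- Covariance of `g(X,Y)` and `h(X,Y)` when `(X,Y)` has joint pmf `f`. -/
def covM (f g h : ℕ → ℕ → ℝ) : ℝ :=
  Emom f (fun x y => g x y * h x y) - Emom f g * Emom f h

/-- Variance of `g(X,Y)` when `(X,Y)` has joint pmf `f`. -/
def varM (f g : ℕ → ℕ → ℝ) : ℝ := Emom f (fun x y => g x y ^ 2) - (Emom f g) ^ 2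

/-- Pearson correlation coefficient of `g(X,Y)` and `h(X,Y)` when `(X,Y)` has
joint pmf `f`. -/
def pearson (f g h : ℕ → ℕ → ℝ) : ℝ :=
  covM f g h / (Real.sqrt (varM f g) * Real.sqrt (varM f h))

/-- The first coordinate `X` as a real-valued statistic. -/
def projX : ℕ → ℕ → ℝ := fun x _ => (x : ℝ)

/-- The second coordinate `Y` as a real-valued statistic. -/
def projY : ℕ → ℕ → ℝ := fun _ y => (y : ℝ)

/-- The indicator `1{X > 0}` as a real-valued statistic. -/
def indX : ℕ → ℕ → ℝ := fun x _ => if 0 < x then 1 else 0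

/-- The indicator `1{Y > 0}` as a real-valued statistic. -/
def indY : ℕ → ℕ → ℝ := fun _ y => if 0 < y then 1 else 0

/-! ### Auxiliary lemmas for `fL_properties` -/

/-- Marginal-in-`x` building block: `a(x) = f^L(x, ·)`'s `x`-factor. -/
def aF (x : ℕ) : ℝ := if x = 0 then 0 else (1 / 6 : ℝ) * (5 / 6) ^ x

/-- Marginal-in-`y` building block: the geometric `(1/7)(6/7)^y`. -/
def bF (y : ℕ) : ℝ := (1 / 7 : ℝ) * (6 / 7) ^ y

lemma hasSum_sq_geom {r : ℝ} (h0 : 0 ≤ r) (h1 : r < 1) :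
    HasSum (fun n : ℕ => (n : ℝ) ^ 2 * r ^ n) (r * (1 + r) / (1 - r) ^ 3) := by
  have hr : ‖r‖ < 1 := by rw [Real.norm_eq_abs, abs_of_nonneg h0]; exact h1
  have A := hasSum_choose_mul_geometric_of_norm_lt_one 2 hr
  have B := hasSum_coe_mul_geometric_of_norm_lt_one hr
  have C := hasSum_geometric_of_lt_one h0 h1
  have D := (A.mul_left 2).sub ((B.mul_left 3).add (C.mul_left 2))
  have hne : (1 : ℝ) - r ≠ 0 := sub_ne_zero.mpr h1.ne'
  convert D using 1
  · rfl
  · funext n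
    have hc : ((n + 2).choose 2 : ℝ) = (n + 2) * (n + 1) / 2 := by
      rw [Nat.cast_choose_two]; push_cast; ring
    rw [hc]; ring
  · field_simp; ring

lemma hasSum_bF : HasSum bF 1 := by
  have := (hasSum_geometric_of_lt_one (by norm_num : (0:ℝ) ≤ 6/7) (by norm_num)).mul_left (1/7 : ℝ)
  convert this using 1
  · rfl
  · rfl
  norm_num

lemma hasSum_aF : HasSum aF (5 / 6) := by
  have g := (hasSum_geometric_of_lt_one (by norm_num : (0:ℝ) ≤ 5/6) (by norm_num)).mul_left (1/6 : ℝ)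
  have i := hasSum_ite_eq (0 : ℕ) (1/6 : ℝ)
  have := g.sub i
  convert this using 1
  · rfl
  · funext n
    by_cases h : n = 0 <;> simp [aF, h]
  · norm_num

lemma hasSum_xa : HasSum (fun x : ℕ => (x : ℝ) * aF x) 5 := by
  have hr : ‖(5/6 : ℝ)‖ < 1 := by rw [Real.norm_eq_abs, abs_of_nonneg (by norm_num)]; norm_num
  have := (hasSum_coe_mul_geometric_of_norm_lt_one hr).mul_left (1/6 : ℝ)
  convert this using 1
  · rfl
  · funext n
    by_cases h : n = 0 <;> simp [aF, h] <;> ring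
  · norm_num

lemma hasSum_x2a : HasSum (fun x : ℕ => (x : ℝ) ^ 2 * aF x) 55 := by
  have := (hasSum_sq_geom (by norm_num : (0:ℝ) ≤ 5/6) (by norm_num)).mul_left (1/6 : ℝ)
  convert this using 1
  · rfl
  · funext n
    by_cases h : n = 0 <;> simp [aF, h] <;> ring
  · norm_num

lemma hasSum_yb : HasSum (fun y : ℕ => (y : ℝ) * bF y) 6 := by
  have hr : ‖(6/7 : ℝ)‖ < 1 := by rw [Real.norm_eq_abs, abs_of_nonneg (by norm_num)]; norm_num
  have := (hasSum_coe_mul_geometric_of_norm_lt_one hr).mul_left (1/7 : ℝ)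
  convert this using 1
  · rfl
  · funext n; simp [bF]; ring
  · norm_num

lemma hasSum_y2b : HasSum (fun y : ℕ => (y : ℝ) ^ 2 * bF y) 78 := by
  have := (hasSum_sq_geom (by norm_num : (0:ℝ) ≤ 6/7) (by norm_num)).mul_left (1/7 : ℝ)
  convert this using 1
  · rfl
  · funext n; simp [bF]; ring
  · norm_num

lemma key {u v : ℕ → ℝ} {su sv : ℝ} (hu : HasSum (fun x => u x * aF x) su)
    (hv : HasSum (fun y => v y * bF y) sv) :
    ∑' p : ℕ × ℕ, (u p.1 * v p.2) * fL p.1 p.2 = su * sv + u 0 * v 0 * (1 / 6) := by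
  have hnu : Summable fun x => ‖u x * aF x‖ := summable_norm_iff.mpr hu.summable
  have hnv : Summable fun y => ‖v y * bF y‖ := summable_norm_iff.mpr hv.summable
  have hfun : (fun p : ℕ × ℕ => (u p.1 * v p.2) * fL p.1 p.2)
      = fun p : ℕ × ℕ => (u p.1 * aF p.1) * (v p.2 * bF p.2)
        + (if p = ((0, 0) : ℕ × ℕ) then u 0 * v 0 * (1 / 6) else 0) := by
    funext p
    obtain ⟨x, y⟩ := p
    by_cases hx : x = 0
    · subst hx
      by_cases hy : y = 0
      · subst hy; simp [fL, aF, bF]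
      · simp [fL, aF, bF, hy, Prod.ext_iff]
    · simp only [fL, aF, bF, if_neg hx, Prod.ext_iff]
      simp [hx]
      ring
  rw [hfun, Summable.tsum_add (summable_mul_of_summable_norm hnu hnv)
        (hasSum_ite_eq ((0, 0) : ℕ × ℕ) (u 0 * v 0 * (1 / 6))).summable,
      tsum_ite_eq]
  congr 1
  rw [← hu.tsum_eq, ← hv.tsum_eq]
  exact (tsum_mul_tsum_of_summable_norm hnu hnv).symm

lemma marg_x (x : ℕ) : (∑' y : ℕ, fL x y) = (1 / 6) * (5 / 6) ^ x := by
  by_cases hx : x = 0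
  · subst hx
    have h : (fun y : ℕ => fL 0 y) = fun y : ℕ => if y = 0 then (1/6 : ℝ) else 0 := by
      funext y; simp [fL]
    rw [h, tsum_ite_eq]
    norm_num
  · have h : (fun y : ℕ => fL x y) = fun y : ℕ => ((1/6 : ℝ) * (5/6) ^ x * (1/7)) * (6/7) ^ y := by
      funext y; simp [fL, hx]; ring
    rw [h, tsum_mul_left, tsum_geometric_of_lt_one (by norm_num) (by norm_num)]
    norm_num
    ring

lemma marg_y (y : ℕ) : (∑' x : ℕ, fL x y)
    = (1 / 6) * (if y = 0 then 1 else 0) + (5 / 6) * ((1 / 7) * (6 / 7) ^ y) := by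
  have hdec : (fun x : ℕ => fL x y)
      = fun x : ℕ => (if x = 0 then (if y = 0 then (1/6 : ℝ) else 0) else 0) + aF x * bF y := by
    funext x
    by_cases hx : x = 0 <;> simp [fL, aF, bF, hx] <;> ring
  rw [hdec, Summable.tsum_add (hasSum_ite_eq (0 : ℕ) _).summable (hasSum_aF.mul_right (bF y)).summable,
      tsum_ite_eq, (hasSum_aF.mul_right (bF y)).tsum_eq]
  by_cases hy : y = 0 <;> simp [bF, hy]

/-- Properties of the low-correlation pmf `f^L`. -/
theorem fL_properties :
    (∀ x y, 0 ≤ fL x y) ∧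
    (∑' p : ℕ × ℕ, fL p.1 p.2 = 1) ∧
    (∀ x : ℕ, (∑' y : ℕ, fL x y) = (1 / 6) * (5 / 6) ^ x) ∧
    (∀ y : ℕ, (∑' x : ℕ, fL x y) =
      (1 / 6) * (if y = 0 then 1 else 0) + (5 / 6) * ((1 / 7) * (6 / 7) ^ y)) ∧
    Emom fL projX = 5 ∧
    Emom fL projY = 5 ∧
    pearson fL projX projY = Real.sqrt 3 / 12 := by
  have hb1 : HasSum (fun y : ℕ => (1 : ℝ) * bF y) 1 := by simpa using hasSum_bF
  have ha1 : HasSum (fun x : ℕ => (1 : ℝ) * aF x) (5 / 6) := by simpa using hasSum_aF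
  have EX : Emom fL projX = 5 := by
    have h := key (u := fun x : ℕ => (x : ℝ)) (v := fun _ : ℕ => (1 : ℝ)) hasSum_xa hb1
    have e : Emom fL projX = ∑' p : ℕ × ℕ, ((p.1 : ℝ) * 1) * fL p.1 p.2 := by
      simp only [Emom, projX]; exact tsum_congr fun p => by ring
    rw [e, h]; norm_num
  have EY : Emom fL projY = 5 := by
    have h := key (u := fun _ : ℕ => (1 : ℝ)) (v := fun y : ℕ => (y : ℝ)) ha1 hasSum_yb
    have e : Emom fL projY = ∑' p : ℕ × ℕ, ((1 : ℝ) * (p.2 : ℝ)) * fL p.1 p.2 := by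
      simp only [Emom, projY]; exact tsum_congr fun p => by ring
    rw [e, h]; norm_num
  have EXY : Emom fL (fun x y => projX x y * projY x y) = 30 := by
    have h := key (u := fun x : ℕ => (x : ℝ)) (v := fun y : ℕ => (y : ℝ)) hasSum_xa hasSum_yb
    have e : Emom fL (fun x y => projX x y * projY x y)
        = ∑' p : ℕ × ℕ, ((p.1 : ℝ) * (p.2 : ℝ)) * fL p.1 p.2 := by
      simp only [Emom, projX, projY]
    rw [e, h]; norm_num
  have EX2 : Emom fL (fun x y => projX x y ^ 2) = 55 := by
    have h := key (u := fun x : ℕ => (x : ℝ) ^ 2) (v := fun _ : ℕ => (1 : ℝ)) hasSum_x2a hb1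
    have e : Emom fL (fun x y => projX x y ^ 2)
        = ∑' p : ℕ × ℕ, ((p.1 : ℝ) ^ 2 * 1) * fL p.1 p.2 := by
      simp only [Emom, projX]; exact tsum_congr fun p => by ring
    rw [e, h]; norm_num
  have EY2 : Emom fL (fun x y => projY x y ^ 2) = 65 := by
    have h := key (u := fun _ : ℕ => (1 : ℝ)) (v := fun y : ℕ => (y : ℝ) ^ 2) ha1 hasSum_y2b
    have e : Emom fL (fun x y => projY x y ^ 2)
        = ∑' p : ℕ × ℕ, ((1 : ℝ) * (p.2 : ℝ) ^ 2) * fL p.1 p.2 := by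
      simp only [Emom, projY]; exact tsum_congr fun p => by ring
    rw [e, h]; norm_num
  refine ⟨?_, ?_, marg_x, marg_y, EX, EY, ?_⟩
  · intro x y
    unfold fL
    split_ifs <;> positivity
  · have h := key (u := fun _ : ℕ => (1 : ℝ)) (v := fun _ : ℕ => (1 : ℝ)) ha1 hb1
    have e : (∑' p : ℕ × ℕ, fL p.1 p.2) = ∑' p : ℕ × ℕ, ((1 : ℝ) * 1) * fL p.1 p.2 :=
      tsum_congr fun p => by ring
    rw [e, h]; norm_num
  · have hcov : covM fL projX projY = 5 := by rw [covM, EXY, EX, EY]; norm_num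
    have hvx : varM fL projX = 30 := by rw [varM, EX2, EX]; norm_num
    have hvy : varM fL projY = 40 := by rw [varM, EY2, EY]; norm_num
    rw [pearson, hcov, hvx, hvy]
    have h3 : Real.sqrt 30 * Real.sqrt 40 = 20 * Real.sqrt 3 := by
      rw [← Real.sqrt_mul (by norm_num : (0:ℝ) ≤ 30),
        show (30 * 40 : ℝ) = 20 ^ 2 * 3 by norm_num,
        Real.sqrt_mul (by positivity), Real.sqrt_sq (by norm_num)]
    have hs : Real.sqrt 3 * Real.sqrt 3 = 3 := Real.mul_self_sqrt (by norm_num)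
    have hpos : 0 < Real.sqrt 3 := Real.sqrt_pos.mpr (by norm_num)
    rw [h3, div_eq_div_iff (by positivity) (by norm_num)]
    nlinarith [hs]


end DelayedClaims
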